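/- Let σ be a polynomial of degree ≤ 2, κ of degree ≤ 1, and ρ nonvanishing with σρ' = κρ on an interval/domain. Define the Rodrigues polynomial P_n(σ,κ;z) = (1/n!)·ρ(z)⁻¹·∂_zⁿ(σ(z)ⁿρ(z)). Then P_n(σ,κ;z) is a polynomial in z of degree at most n, and it satisfies the differential equation σ(z)P_n'' + (σ'(z)+κ(z))P_n' − (n(n+1)σ''/2 + nκ')P_n = 0. -/

import Mathlib

open Polynomial

/-- The Rodrigues expression `P_n(σ,κ;z) = (1/n!)·ρ(z)⁻¹·∂_zⁿ(σ(z)ⁿρ(z))`. -/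
noncomputable def rodrigues (σ : Polynomial ℂ) (ρ : ℂ → ℂ) (n : ℕ) (z : ℂ) : ℂ :=
  ((n.factorial : ℂ))⁻¹ * (ρ z)⁻¹ * iteratedDeriv n (fun w => σ.eval w ^ n * ρ w) z


open scoped ContDiff

private lemma contDiff_eval' (p : Polynomial ℂ) : ContDiff ℂ ∞ fun z => p.eval z := by
  induction p using Polynomial.induction_on' with
  | add p q hp hq => simpa using hp.add hq
  | monomial n a => simpa [eval_monomial] using (contDiff_const (c := a)).mul (contDiff_id.pow n)

private lemma itd_diff {f : ℂ → ℂ} (hf : ContDiff ℂ ∞ f) (m : ℕ) :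
    Differentiable ℂ (iteratedDeriv m f) :=
  hf.differentiable_iteratedDeriv m (by norm_cast; exact ENat.coe_lt_top m)

private lemma deriv_eval_mul (p : Polynomial ℂ) {g : ℂ → ℂ} {z : ℂ}
    (hg : DifferentiableAt ℂ g z) :
    deriv (fun w => p.eval w * g w) z = (derivative p).eval z * g z + p.eval z * deriv g z := by
  rw [deriv_fun_mul p.differentiableAt hg, Polynomial.deriv]

private lemma leibniz2 (p : Polynomial ℂ)
    (hp : derivative (derivative (derivative p)) = 0)
    {f : ℂ → ℂ} (hf : ContDiff ℂ ∞ f) (m : ℕ) (z : ℂ) :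
    iteratedDeriv (m + 2) (fun w => p.eval w * f w) z
      = p.eval z * iteratedDeriv (m + 2) f z
        + ((m : ℂ) + 2) * ((derivative p).eval z * iteratedDeriv (m + 1) f z)
        + ((m : ℂ) + 2) * ((m : ℂ) + 1) / 2
            * ((derivative (derivative p)).eval z * iteratedDeriv m f z) := by
  induction m generalizing z with
  | zero =>
    have hder : deriv (fun w => p.eval w * f w)
        = fun w => (derivative p).eval w * f w + p.eval w * deriv f w :=
      funext fun w => deriv_eval_mul p ((hf.differentiable (by norm_cast)) w)
    have h2 : iteratedDeriv 2 (fun w => p.eval w * f w) z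
        = deriv (fun w => (derivative p).eval w * f w + p.eval w * deriv f w) z := by
      rw [iteratedDeriv_succ, iteratedDeriv_one, hder]
    have hdf : DifferentiableAt ℂ f z := (hf.differentiable (by norm_cast)) z
    have hdf' : DifferentiableAt ℂ (deriv f) z := by
      have := (itd_diff hf 1) z
      simpa [iteratedDeriv_one] using this
    rw [h2, deriv_fun_add ((derivative p).differentiableAt.fun_mul hdf)
        (p.differentiableAt.fun_mul hdf'), deriv_eval_mul _ hdf, deriv_eval_mul _ hdf']
    have e2 : iteratedDeriv 2 f z = deriv (deriv f) z := by
      rw [iteratedDeriv_succ, iteratedDeriv_one]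
    have e1 : iteratedDeriv 1 f z = deriv f z := by rw [iteratedDeriv_one]
    rw [e2, e1, iteratedDeriv_zero]
    push_cast
    ring
  | succ m ih =>
    have hfun : iteratedDeriv (m + 2) (fun w => p.eval w * f w)
        = fun w => p.eval w * iteratedDeriv (m + 2) f w
          + ((m : ℂ) + 2) * ((derivative p).eval w * iteratedDeriv (m + 1) f w)
          + ((m : ℂ) + 2) * ((m : ℂ) + 1) / 2
              * ((derivative (derivative p)).eval w * iteratedDeriv m f w) :=
      funext fun w => ih w
    have h3 : iteratedDeriv (m + 1 + 2) (fun w => p.eval w * f w) z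
        = deriv (iteratedDeriv (m + 2) (fun w => p.eval w * f w)) z := by
      rw [show m + 1 + 2 = (m + 2) + 1 by omega, iteratedDeriv_succ]
    rw [h3, hfun]
    have d2 : DifferentiableAt ℂ (iteratedDeriv (m + 2) f) z := (itd_diff hf (m+2)) z
    have d1 : DifferentiableAt ℂ (iteratedDeriv (m + 1) f) z := (itd_diff hf (m+1)) z
    have d0 : DifferentiableAt ℂ (iteratedDeriv m f) z := (itd_diff hf m) z
    have hA : DifferentiableAt ℂ (fun w => p.eval w * iteratedDeriv (m + 2) f w) z :=
      p.differentiableAt.mul d2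
    have hB : DifferentiableAt ℂ
        (fun w => ((m : ℂ) + 2) * ((derivative p).eval w * iteratedDeriv (m + 1) f w)) z :=
      ((derivative p).differentiableAt.mul d1).const_mul _
    have hC : DifferentiableAt ℂ
        (fun w => ((m : ℂ) + 2) * ((m : ℂ) + 1) / 2
          * ((derivative (derivative p)).eval w * iteratedDeriv m f w)) z :=
      ((derivative (derivative p)).differentiableAt.mul d0).const_mul _
    rw [deriv_fun_add (hA.fun_add hB) hC, deriv_fun_add hA hB,
      deriv_eval_mul _ d2,
      deriv_const_mul _ ((derivative p).differentiableAt.fun_mul d1),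
      deriv_eval_mul _ d1,
      deriv_const_mul _ ((derivative (derivative p)).differentiableAt.fun_mul d0),
      deriv_eval_mul _ d0, hp]
    have e3 := congrFun (iteratedDeriv_succ (n := m + 2) (f := f)) z
    have e2 := congrFun (iteratedDeriv_succ (n := m + 1) (f := f)) z
    have e1 := congrFun (iteratedDeriv_succ (n := m) (f := f)) z
    rw [← e3, ← e2, ← e1]
    simp only [eval_zero, zero_mul, mul_zero, add_zero]
    simp only [show m + 2 + 1 = m + 1 + 2 from by omega, show m + 1 + 1 = m + 1 + 1 from rfl]
    push_cast
    ring

noncomputable def rodQ (σ κ : Polynomial ℂ) (n : ℕ) : ℕ → Polynomial ℂ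
  | 0 => 1
  | k + 1 => C (((n - k : ℕ) : ℂ)) * derivative σ * rodQ σ κ n k
      + σ * derivative (rodQ σ κ n k) + κ * rodQ σ κ n k

private lemma rodQ_natDegree (σ κ : Polynomial ℂ) (n : ℕ)
    (hσ : σ.natDegree ≤ 2) (hκ : κ.natDegree ≤ 1) :
    ∀ k, (rodQ σ κ n k).natDegree ≤ k := by
  intro k
  induction k with
  | zero => simp [rodQ]
  | succ k ih =>
    have h1 : (C (((n - k : ℕ) : ℂ)) * derivative σ * rodQ σ κ n k).natDegree ≤ k + 1 := by
      refine natDegree_mul_le.trans ?_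
      have := natDegree_mul_le (p := C (((n - k : ℕ) : ℂ))) (q := derivative σ)
      have hd : (derivative σ).natDegree ≤ 1 := (natDegree_derivative_le σ).trans (by omega)
      simp only [natDegree_C] at this
      omega
    have h2 : (σ * derivative (rodQ σ κ n k)).natDegree ≤ k + 1 := by
      rcases eq_or_ne (derivative (rodQ σ κ n k)) 0 with h | h
      · simp [h]
      · have hk1 : 1 ≤ (rodQ σ κ n k).natDegree := by
          by_contra hc
          push_neg at hc
          have : (rodQ σ κ n k).natDegree = 0 := by omega
          rw [eq_C_of_natDegree_eq_zero this, derivative_C] at h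
          exact h rfl
        have hd : (derivative (rodQ σ κ n k)).natDegree ≤ k - 1 :=
          (natDegree_derivative_le _).trans (by omega)
        refine natDegree_mul_le.trans (by omega)
    have h3 : (κ * rodQ σ κ n k).natDegree ≤ k + 1 :=
      natDegree_mul_le.trans (by omega)
    rw [show rodQ σ κ n (k+1) = C (((n - k : ℕ) : ℂ)) * derivative σ * rodQ σ κ n k
      + σ * derivative (rodQ σ κ n k) + κ * rodQ σ κ n k from rfl]
    exact (natDegree_add_le _ _).trans (max_le ((natDegree_add_le _ _).trans (max_le h1 h2)) h3)

private lemma rodQ_spec (σ κ : Polynomial ℂ) (n : ℕ)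
    (ρ : ℂ → ℂ) (hρ : ContDiff ℂ ∞ ρ) (hrel : ∀ z, σ.eval z * deriv ρ z = κ.eval z * ρ z) :
    ∀ k, k ≤ n → ∀ z, iteratedDeriv k (fun w => σ.eval w ^ n * ρ w) z
      = (σ ^ (n - k) * rodQ σ κ n k).eval z * ρ z := by
  intro k
  induction k with
  | zero => intro _ z; simp [rodQ, iteratedDeriv_zero]
  | succ k ih =>
    intro hk z
    have hk' : k ≤ n := by omega
    have hfun : iteratedDeriv k (fun w => σ.eval w ^ n * ρ w)
        = fun w => (σ ^ (n - k) * rodQ σ κ n k).eval w * ρ w := funext fun w => ih hk' w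
    have h1 : iteratedDeriv (k + 1) (fun w => σ.eval w ^ n * ρ w) z
        = deriv (fun w => (σ ^ (n - k) * rodQ σ κ n k).eval w * ρ w) z := by
      rw [iteratedDeriv_succ, hfun]
    rw [h1, deriv_eval_mul _ ((hρ.differentiable (by norm_cast)) z)]
    obtain ⟨m, hm⟩ : ∃ m, n - k = m + 1 := ⟨n - (k+1), by omega⟩
    have hm' : n - (k + 1) = m := by omega
    have hnk : n - k = m + 1 := hm
    rw [hnk, hm']
    have hρ' : (σ ^ (m + 1) * rodQ σ κ n k).eval z * deriv ρ z
        = (σ ^ m * rodQ σ κ n k).eval z * (κ.eval z * ρ z) := by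
      rw [← hrel z]
      simp only [eval_mul, eval_pow, pow_succ]
      ring
    rw [hρ']
    have hqs : rodQ σ κ n (k + 1) = C (((m + 1 : ℕ) : ℂ)) * derivative σ * rodQ σ κ n k
        + σ * derivative (rodQ σ κ n k) + κ * rodQ σ κ n k := by
      rw [show rodQ σ κ n (k+1) = C (((n - k : ℕ) : ℂ)) * derivative σ * rodQ σ κ n k
        + σ * derivative (rodQ σ κ n k) + κ * rodQ σ κ n k from rfl, hnk]
    rw [hqs]
    simp only [derivative_mul, derivative_pow, eval_add, eval_mul, eval_pow, eval_C,
      Nat.add_sub_cancel]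
    push_cast
    ring


/-- The Rodrigues formula: `P_n(σ,κ;·)` is a polynomial of degree ≤ `n` and satisfies
`σP_n'' + (σ'+κ)P_n' − (n(n+1)σ''/2 + nκ')P_n = 0`. -/
theorem rodrigues_polynomial_and_equation (σ κ : Polynomial ℂ)
    (hσ : σ.natDegree ≤ 2) (hκ : κ.natDegree ≤ 1)
    (ρ : ℂ → ℂ) (hρ : ContDiff ℂ ⊤ ρ) (hρ0 : ∀ z, ρ z ≠ 0)
    (hrel : ∀ z, σ.eval z * deriv ρ z = κ.eval z * ρ z) (n : ℕ) :
    (∃ Q : Polynomial ℂ, Q.natDegree ≤ n ∧ ∀ z, rodrigues σ ρ n z = Q.eval z) ∧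
    (∀ z : ℂ,
      σ.eval z * deriv (deriv (rodrigues σ ρ n)) z
        + ((derivative σ).eval z + κ.eval z) * deriv (rodrigues σ ρ n) z
        - ((n : ℂ) * ((n : ℂ) + 1) * (derivative (derivative σ)).coeff 0 / 2
            + (n : ℂ) * (derivative κ).coeff 0) * rodrigues σ ρ n z = 0) := by
  have hrhoInf : ContDiff ℂ ∞ ρ := hρ.of_le le_top
  have hρdiff : ∀ w : ℂ, DifferentiableAt ℂ ρ w := fun w => (hrhoInf.differentiable (by norm_cast)) w
  have hρ1 : ContDiff ℂ ∞ (deriv ρ) := (contDiff_infty_iff_deriv.mp hrhoInf).2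
  have hρ1diff : ∀ w : ℂ, DifferentiableAt ℂ (deriv ρ) w :=
    fun w => (hρ1.differentiable (by norm_cast)) w
  have hfact : ((n.factorial : ℂ)) ≠ 0 := Nat.cast_ne_zero.mpr n.factorial_ne_zero
  have hspec := rodQ_spec σ κ n ρ hrhoInf hrel n le_rfl
  have hQeval : ∀ z, rodrigues σ ρ n z = (C ((n.factorial : ℂ))⁻¹ * rodQ σ κ n n).eval z := by
    intro z
    have h := hspec z
    simp only [Nat.sub_self, pow_zero, one_mul] at h
    simp only [rodrigues]
    rw [h]
    have h0 := hρ0 z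
    simp only [eval_mul, eval_C]
    field_simp
  refine ⟨⟨C ((n.factorial : ℂ))⁻¹ * rodQ σ κ n n,
    natDegree_mul_le.trans (by simpa [natDegree_C] using rodQ_natDegree σ κ n hσ hκ n),
    hQeval⟩, ?_⟩
  by_cases hn : n = 0
  · subst hn
    intro z
    have h1 : rodrigues σ ρ 0 = fun _ => (1 : ℂ) := funext fun w => by
      simp [rodrigues, iteratedDeriv_zero, inv_mul_cancel₀ (hρ0 w)]
    rw [h1]
    simp
  · obtain ⟨N, rfl⟩ : ∃ N, n = N + 1 := ⟨n - 1, by omega⟩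
    by_cases hσ0 : σ = 0
    · have hκ0 : κ = 0 := by
        apply Polynomial.funext
        intro w
        have h := hrel w
        rw [hσ0] at h
        simp only [eval_zero, zero_mul] at h
        have h2 := (mul_eq_zero.mp h.symm).resolve_right (hρ0 w)
        simpa using h2
      intro z
      simp [hσ0, hκ0]
    · -- main case
      set Qp := C (((N+1).factorial : ℂ))⁻¹ * rodQ σ κ (N+1) (N+1) with hQpdef
      have hfact1 : (((N+1).factorial : ℂ)) ≠ 0 := Nat.cast_ne_zero.mpr (Nat.factorial_ne_zero _)
      have hu : ContDiff ℂ ∞ (fun x => σ.eval x ^ (N+1) * ρ x) :=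
        ((contDiff_eval' σ).pow _).mul hrhoInf
      have hud : ContDiff ℂ ∞ (deriv (fun x => σ.eval x ^ (N+1) * ρ x)) :=
        (contDiff_infty_iff_deriv.mp hu).2
      have hσ2deg : (derivative (derivative σ)).natDegree = 0 := by
        have h1 := natDegree_derivative_le σ
        have h2 := natDegree_derivative_le (derivative σ)
        omega
      have hκ1deg : (derivative κ).natDegree = 0 := by
        have h1 := natDegree_derivative_le κ
        omega
      have hc2 : derivative (derivative σ) = C ((derivative (derivative σ)).coeff 0) :=
        eq_C_of_natDegree_eq_zero hσ2deg
      have hc1 : derivative κ = C ((derivative κ).coeff 0) :=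
        eq_C_of_natDegree_eq_zero hκ1deg
      have hσ3 : derivative (derivative (derivative σ)) = 0 := by rw [hc2]; exact derivative_C
      have hκ2 : derivative (derivative κ) = 0 := by rw [hc1]; exact derivative_C
      have hc2e : ∀ w : ℂ, (derivative (derivative σ)).eval w
          = (derivative (derivative σ)).coeff 0 := fun w => by
        conv_lhs => rw [hc2]
        rw [eval_C]
      have hc1e : ∀ w : ℂ, (derivative κ).eval w = (derivative κ).coeff 0 := fun w => by
        conv_lhs => rw [hc1]
        rw [eval_C]
      have hrdd : derivative (derivative (C (((N+1:ℕ)) : ℂ) * derivative σ + κ)) = 0 := by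
        simp [derivative_add, derivative_C_mul, hσ3, hκ2]
      have hr3 : derivative (derivative (derivative (C (((N+1:ℕ)) : ℂ) * derivative σ + κ))) = 0 := by
        rw [hrdd, derivative_zero]
      have hfo : (fun w => σ.eval w * deriv (fun x => σ.eval x ^ (N+1) * ρ x) w)
          = fun w => (C (((N+1:ℕ)) : ℂ) * derivative σ + κ).eval w * (σ.eval w ^ (N+1) * ρ w) := by
        funext w
        have heq : (fun x => σ.eval x ^ (N+1) * ρ x) = fun x => (σ ^ (N+1)).eval x * ρ x := by
          funext x; rw [eval_pow]
        rw [heq, deriv_eval_mul _ (hρdiff w)]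
        simp only [derivative_pow, Nat.add_sub_cancel, eval_add, eval_mul, eval_pow, eval_C]
        have h := hrel w
        push_cast
        linear_combination (σ.eval w ^ N * σ.eval w) * h
      have hspec1 := rodQ_spec σ κ (N+1) ρ hrhoInf hrel (N+1) le_rfl
      have hqQ : rodQ σ κ (N+1) (N+1) = C (((N+1).factorial : ℂ)) * Qp := by
        rw [hQpdef, ← mul_assoc, ← C_mul, mul_inv_cancel₀ hfact1, C_1, one_mul]
      have E0 : ∀ w : ℂ, iteratedDeriv (N+1) (fun x => σ.eval x ^ (N+1) * ρ x) w
          = (C (((N+1).factorial : ℂ)) * Qp).eval w * ρ w := fun w => by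
        have h := hspec1 w
        simp only [Nat.sub_self, pow_zero, one_mul] at h
        rw [h, hqQ]
      have E1 : ∀ w : ℂ, iteratedDeriv (N+2) (fun x => σ.eval x ^ (N+1) * ρ x) w
          = (derivative (C (((N+1).factorial : ℂ)) * Qp)).eval w * ρ w
            + (C (((N+1).factorial : ℂ)) * Qp).eval w * deriv ρ w := fun w => by
        rw [show N + 2 = (N+1) + 1 by omega, iteratedDeriv_succ, funext E0]
        exact deriv_eval_mul _ (hρdiff w)
      have E2 : ∀ w : ℂ, iteratedDeriv (N+3) (fun x => σ.eval x ^ (N+1) * ρ x) w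
          = ((derivative (derivative (C (((N+1).factorial : ℂ)) * Qp))).eval w * ρ w
              + (derivative (C (((N+1).factorial : ℂ)) * Qp)).eval w * deriv ρ w)
            + ((derivative (C (((N+1).factorial : ℂ)) * Qp)).eval w * deriv ρ w
              + (C (((N+1).factorial : ℂ)) * Qp).eval w * deriv (deriv ρ) w) := fun w => by
        rw [show N + 3 = (N+2) + 1 by omega, iteratedDeriv_succ, funext E1,
          deriv_fun_add ((derivative (C (((N+1).factorial : ℂ)) * Qp)).differentiableAt.fun_mul (hρdiff w))
            ((C (((N+1).factorial : ℂ)) * Qp).differentiableAt.fun_mul (hρ1diff w)),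
          deriv_eval_mul _ (hρdiff w), deriv_eval_mul _ (hρ1diff w)]
      have hderiv2 : ∀ w : ℂ, (derivative σ).eval w * deriv ρ w + σ.eval w * deriv (deriv ρ) w
          = (derivative κ).eval w * ρ w + κ.eval w * deriv ρ w := fun w => by
        have h1 := congrFun (congrArg deriv
          (funext hrel : (fun z => σ.eval z * deriv ρ z) = fun z => κ.eval z * ρ z)) w
        rwa [deriv_eval_mul σ (hρ1diff w), deriv_eval_mul κ (hρdiff w)] at h1
      have hr2z : ∀ w : ℂ, σ.eval w ^ 2 * deriv (deriv ρ) w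
          = (σ.eval w * (derivative κ).coeff 0 + κ.eval w ^ 2
              - (derivative σ).eval w * κ.eval w) * ρ w := fun w => by
        have h1 := hderiv2 w
        rw [hc1e w] at h1
        linear_combination σ.eval w * h1 + (κ.eval w - (derivative σ).eval w) * hrel w
      have hTzero : σ ^ 2 * (σ * derivative (derivative Qp)
          + (derivative σ + κ) * derivative Qp
          - C ((((N+1:ℕ)) : ℂ) * ((((N+1:ℕ)) : ℂ) + 1) * (derivative (derivative σ)).coeff 0 / 2
              + (((N+1:ℕ)) : ℂ) * (derivative κ).coeff 0) * Qp) = 0 := by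
        apply Polynomial.funext
        intro w
        rw [eval_zero]
        have hL := leibniz2 σ hσ3 hud N w
        have hR := leibniz2 (C (((N+1:ℕ)) : ℂ) * derivative σ + κ) hr3 hu N w
        have hiter := congrFun (congrArg (iteratedDeriv (N + 2)) hfo) w
        have h := (hL.symm.trans hiter).trans hR
        have i2 := congrFun (iteratedDeriv_succ' (n := N+2) (f := fun x => σ.eval x ^ (N+1) * ρ x)) w
        have i1 := congrFun (iteratedDeriv_succ' (n := N+1) (f := fun x => σ.eval x ^ (N+1) * ρ x)) w
        have i0 := congrFun (iteratedDeriv_succ' (n := N) (f := fun x => σ.eval x ^ (N+1) * ρ x)) w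
        rw [← i2, ← i1, ← i0] at h
        rw [show N + 2 + 1 = N + 3 by omega, show N + 1 + 1 = N + 2 by omega] at h
        rw [E2 w, E1 w, E0 w, hrdd] at h
        simp only [derivative_add, derivative_C_mul, eval_add, eval_mul, eval_C, eval_zero,
          zero_mul, mul_zero, add_zero] at h
        rw [hc2e w, hc1e w] at h
        have key : (((N+1).factorial : ℂ)) * ((σ ^ 2 * (σ * derivative (derivative Qp)
            + (derivative σ + κ) * derivative Qp
            - C ((((N+1:ℕ)) : ℂ) * ((((N+1:ℕ)) : ℂ) + 1) * (derivative (derivative σ)).coeff 0 / 2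
                + (((N+1:ℕ)) : ℂ) * (derivative κ).coeff 0) * Qp)).eval w * ρ w) = 0 := by
          simp only [eval_mul, eval_pow, eval_add, eval_sub, eval_C]
          push_cast at h ⊢
          linear_combination (σ.eval w)^2 * h
            - (((N+1).factorial : ℂ)) * σ.eval w * Qp.eval w * hr2z w
            - (((N+1).factorial : ℂ)) * σ.eval w * (2 * σ.eval w * (derivative Qp).eval w
                + ((derivative σ).eval w - κ.eval w) * Qp.eval w) * hrel w
        rcases mul_eq_zero.mp key with h' | h'
        · exact absurd h' hfact1
        · rcases mul_eq_zero.mp h' with h'' | h''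
          · exact h''
          · exact absurd h'' (hρ0 w)
      have hT : σ * derivative (derivative Qp) + (derivative σ + κ) * derivative Qp
          - C ((((N+1:ℕ)) : ℂ) * ((((N+1:ℕ)) : ℂ) + 1) * (derivative (derivative σ)).coeff 0 / 2
              + (((N+1:ℕ)) : ℂ) * (derivative κ).coeff 0) * Qp = 0 :=
        (mul_eq_zero.mp hTzero).resolve_left (pow_ne_zero 2 hσ0)
      intro z
      have hPfun : rodrigues σ ρ (N+1) = fun w => Qp.eval w := funext hQeval
      have hd1z : ∀ w : ℂ, deriv (rodrigues σ ρ (N+1)) w = (derivative Qp).eval w := fun w => by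
        rw [hPfun]; exact Polynomial.deriv (p := Qp)
      have hd2z : ∀ w : ℂ, deriv (deriv (rodrigues σ ρ (N+1))) w
          = (derivative (derivative Qp)).eval w := fun w => by
        have : deriv (rodrigues σ ρ (N+1)) = fun w => (derivative Qp).eval w := funext hd1z
        rw [this]; exact Polynomial.deriv (p := derivative Qp)
      rw [hd2z z, hd1z z, hQeval z]
      have hTe := congrArg (eval z) hT
      simp only [eval_add, eval_sub, eval_mul, eval_C, eval_zero] at hTe
      push_cast at hTe ⊢
      linear_combination hTe
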